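/- If a simple graph G contains an edge uv with deg(u) ≥ 3 and deg(v) = 1, then the line graph L(G) is not a 2-variegated graph. -/

import Mathlib

open SimpleGraph
open scoped Classical

/-- A graph is 2-variegated (bivariegated) if its vertex set can be partitioned into
two equinumerous parts such that every vertex is adjacent to exactly one vertex
of the part not containing it. -/
def SimpleGraph.IsBivariegated {V : Type*} (G : SimpleGraph V) : Prop :=
  ∃ f : V → Bool,
    Nonempty ({v // f v = true} ≃ {v // f v = false}) ∧
    ∀ v : V, ∃! w : V, f w ≠ f v ∧ G.Adj v w
theorem lineGraph_not_bivariegated_of_edge_deg_three_one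
    {V : Type*} [Fintype V] (G : SimpleGraph V) (u v : V)
    (huv : G.Adj u v) (hu : 3 ≤ G.degree u) (hv : G.degree v = 1) :
    ¬ (G.lineGraph).IsBivariegated := by
  rintro ⟨f, -, hf⟩
  classical
  set e : G.edgeSet := ⟨s(u, v), huv⟩ with he
  -- every edge containing v equals e
  have hvonly : ∀ a : G.edgeSet, v ∈ (a : Sym2 V) → a = e := by
    intro a hva
    have ha : (a : Sym2 V) ∈ G.incidenceFinset v := by
      rw [mem_incidenceFinset]
      exact ⟨a.2, hva⟩
    have hev : (e : Sym2 V) ∈ G.incidenceFinset v := by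
      rw [mem_incidenceFinset]
      exact ⟨huv, by simp [he]⟩
    have hcard : (G.incidenceFinset v).card = 1 := by
      rw [card_incidenceFinset_eq_degree]; exact hv
    obtain ⟨x, hx⟩ := Finset.card_eq_one.mp hcard
    ext1
    rw [hx, Finset.mem_singleton] at ha hev
    rw [ha, hev]
  obtain ⟨w, ⟨hwf, hwe⟩, hwuniq⟩ := hf e
  -- w contains u
  have hwu : u ∈ (w : Sym2 V) := by
    obtain ⟨hne, x, hx1, hx2⟩ := (lineGraph_adj_iff_exists).mp hwe
    have : x = u ∨ x = v := by
      have := hx1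
      simpa [he, Sym2.mem_iff] using this
    rcases this with rfl | rfl
    · exact hx2
    · exact absurd (hvonly w hx2) (Ne.symm hne)
  -- find a third edge a at u, a ≠ e, a ≠ w
  have hcu : 3 ≤ (G.incidenceFinset u).card := by
    rw [card_incidenceFinset_eq_degree]; exact hu
  have hnonempty : (((G.incidenceFinset u).erase (e : Sym2 V)).erase (w : Sym2 V)).Nonempty := by
    rw [← Finset.card_pos]
    have h1 : (G.incidenceFinset u).card - 1 ≤ ((G.incidenceFinset u).erase (e : Sym2 V)).card :=
      Finset.pred_card_le_card_erase
    have h2 : ((G.incidenceFinset u).erase (e : Sym2 V)).card - 1 ≤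
        (((G.incidenceFinset u).erase (e : Sym2 V)).erase (w : Sym2 V)).card :=
      Finset.pred_card_le_card_erase
    omega
  obtain ⟨a', ha'⟩ := hnonempty
  have ha'w : a' ≠ (w : Sym2 V) := (Finset.mem_erase.mp ha').1
  have ha'rest := (Finset.mem_erase.mp ha').2
  have ha'e : a' ≠ (e : Sym2 V) := (Finset.mem_erase.mp ha'rest).1
  have ha'mem : a' ∈ G.incidenceSet u := (G.mem_incidenceFinset (v := u) a').mp (Finset.mem_erase.mp ha'rest).2
  set a : G.edgeSet := ⟨a', ha'mem.1⟩ with ha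
  have hau : u ∈ (a : Sym2 V) := ha'mem.2
  have hane : a ≠ e := fun h => ha'e (congrArg Subtype.val h)
  have hanw : a ≠ w := fun h => ha'w (congrArg Subtype.val h)
  -- a is adjacent to e in the line graph
  have haAdj : (G.lineGraph).Adj e a :=
    (lineGraph_adj_iff_exists).mpr ⟨Ne.symm hane, u, by simp [he], hau⟩
  -- a has same color as e (else contradicts uniqueness of w)
  have hfa : f a = f e := by
    by_contra hfa
    exact hanw (hwuniq a ⟨hfa, haAdj⟩)
  -- now w has two opposite-colored neighbors: e and a
  obtain ⟨z, -, hzuniq⟩ := hf w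
  have h1 : e = z := hzuniq e ⟨Ne.symm hwf, hwe.symm⟩
  have h2 : a = z := by
    apply hzuniq a
    constructor
    · rw [hfa]; exact Ne.symm hwf
    · exact (lineGraph_adj_iff_exists).mpr ⟨Ne.symm hanw, u, hwu, hau⟩
  exact hane (h2.trans h1.symm)
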